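/- Let X be a set with |X| ≥ 4. Then there is no rack (X,*) whose left multiplication group Lmlt(X,*) equals the full symmetric group S_X. -/

import Mathlib

/-- A rack: a binary operation with bijective left translations satisfying the left
self-distributive law. -/
structure RackStr (X : Type*) where
  op : X → X → X
  bij : ∀ x, Function.Bijective (op x)
  self_distrib : ∀ x y z, op x (op y z) = op (op x y) (op x z)

/-- A quandle: an idempotent rack. -/
structure QuandleStr (X : Type*) extends RackStr X where
  idem : ∀ x, op x x = x

namespace RackStr

variable {X : Type*}

/-- The left translation `L_x : y ↦ x * y`, as a permutation of `X`. -/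
noncomputable def L (Q : RackStr X) (x : X) : Equiv.Perm X :=
  Equiv.ofBijective (Q.op x) (Q.bij x)

/-- The left multiplication group `Lmlt(X,*) = ⟨L_x : x ∈ X⟩ ≤ S_X`. -/
noncomputable def lmlt (Q : RackStr X) : Subgroup (Equiv.Perm X) :=
  Subgroup.closure (Set.range Q.L)

end RackStr

/-- `R` is a complete set of representatives of the orbits of `G ≤ S_X` on `X`:
every `y ∈ X` lies in the orbit of a unique element of `R`. -/
def IsTransversal {X : Type*} (G : Subgroup (Equiv.Perm X)) (R : Set X) : Prop :=
  ∀ y : X, ∃! x : X, x ∈ R ∧ ∃ g ∈ G, g • y = x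

/-- The stabilizer `G_x` of `x` in `G`, as a subgroup of `S_X`. -/
def stabIn {X : Type*} (G : Subgroup (Equiv.Perm X)) (x : X) : Subgroup (Equiv.Perm X) :=
  G ⊓ MulAction.stabilizer (Equiv.Perm X) x

/-- The centralizer `C_G(G_x)` of the stabilizer `G_x` in `G`, as a subgroup of `S_X`. -/
def cgStab {X : Type*} (G : Subgroup (Equiv.Perm X)) (x : X) : Subgroup (Equiv.Perm X) :=
  G ⊓ Subgroup.centralizer (stabIn G x : Set (Equiv.Perm X))

/-- The center `Z(G_x)` of the stabilizer `G_x`, as a subgroup of `S_X`. -/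
def zStab {X : Type*} (G : Subgroup (Equiv.Perm X)) (x : X) : Subgroup (Equiv.Perm X) :=
  stabIn G x ⊓ Subgroup.centralizer (stabIn G x : Set (Equiv.Perm X))

/-- The conjugacy class `a^G = { g⁻¹ a g : g ∈ G }` of `a` under `G`
(written in left-action convention). -/
def conjClassOf {X : Type*} (G : Subgroup (Equiv.Perm X)) (a : Equiv.Perm X) :
    Set (Equiv.Perm X) :=
  {h | ∃ g ∈ G, h = g * a * g⁻¹}

open Classical in
/-- Helper: from `4 ≤ |X|` we can avoid any three points. -/
lemma exists_ne_ne_ne {X : Type*} (h : 4 ≤ Cardinal.mk X) (a b c : X) :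
    ∃ u : X, u ≠ a ∧ u ≠ b ∧ u ≠ c := by
  by_contra hu
  push_neg at hu
  have hsurj : Function.Surjective
      (fun i : ULift.{_,0} (Fin 3) => if i.down = 0 then a else if i.down = 1 then b else c) := by
    intro y
    by_cases h1 : y = a
    · exact ⟨⟨0⟩, by simp [h1]⟩
    by_cases h2 : y = b
    · exact ⟨⟨1⟩, by simp [h2]⟩
    · exact ⟨⟨2⟩, by simp [(hu y h1 h2)]⟩
  have h3 := Cardinal.mk_le_of_surjective hsurj
  simp [Cardinal.mk_fin] at h3
  have : (4 : Cardinal) ≤ 3 := le_trans h h3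
  norm_num at this

open Classical in
/-- If a permutation commutes with every permutation fixing `x`, it is the identity
(when we can always avoid three points). -/
lemma centralizes_stab_eq_one {X : Type*} (h : 4 ≤ Cardinal.mk X) (x : X)
    (c : Equiv.Perm X) (hc : ∀ σ : Equiv.Perm X, σ x = x → σ * c = c * σ) : c = 1 := by
  have hcx : c x = x := by
    by_contra hw
    obtain ⟨u, hux, huw, -⟩ := exists_ne_ne_ne h x (c x) x
    have hσx : (Equiv.swap (c x) u) x = x :=
      Equiv.swap_apply_of_ne_of_ne (Ne.symm hw) (Ne.symm hux)
    have := congrArg (fun f : Equiv.Perm X => f x) (hc (Equiv.swap (c x) u) hσx)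
    simp only [Equiv.Perm.mul_apply, hσx, Equiv.swap_apply_left] at this
    exact huw this
  ext y
  by_contra hy
  simp only [Equiv.Perm.one_apply] at hy
  have hyx : y ≠ x := by
    rintro rfl; exact hy hcx
  have hwx : c y ≠ x := by
    intro hh
    exact hyx (c.injective (hh.trans hcx.symm))
  obtain ⟨u, hux, huy, huw⟩ := exists_ne_ne_ne h x y (c y)
  have hσx : (Equiv.swap y u) x = x :=
    Equiv.swap_apply_of_ne_of_ne (Ne.symm hyx) (Ne.symm hux)
  have := congrArg (fun f : Equiv.Perm X => f y) (hc (Equiv.swap y u) hσx)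
  simp only [Equiv.Perm.mul_apply, Equiv.swap_apply_left] at this
  rw [Equiv.swap_apply_of_ne_of_ne hy (fun hh => huw hh.symm)] at this
  exact huy (c.injective this.symm)

lemma rack_conj {X : Type*} (Q : RackStr X) :
    ∀ g ∈ Q.lmlt, ∀ x, g * Q.L x * g⁻¹ = Q.L (g x) := by
  intro g hg
  induction hg using Subgroup.closure_induction with
  | mem g hg =>
    obtain ⟨y, rfl⟩ := hg
    intro x
    ext z
    have hz : Q.L y ((Q.L y)⁻¹ z) = z := (Q.L y).apply_symm_apply z
    simp only [Equiv.Perm.mul_apply]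
    show Q.op y (Q.op x ((Q.L y)⁻¹ z)) = Q.op (Q.op y x) z
    rw [Q.self_distrib]
    show Q.op (Q.op y x) (Q.L y ((Q.L y)⁻¹ z)) = _
    rw [hz]
  | one => intro x; simp
  | mul g h _ _ ihg ihh =>
    intro x
    have heq : g * h * Q.L x * (g * h)⁻¹ = g * (h * Q.L x * h⁻¹) * g⁻¹ := by group
    rw [heq, ihh, ihg]
    rfl
  | inv g _ ihg =>
    intro x
    have h1 := ihg (g⁻¹ x)
    have h2 : Q.L (g (g⁻¹ x)) = Q.L x := by rw [show g (g⁻¹ x) = x from g.apply_symm_apply x]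
    rw [h2] at h1
    rw [← h1]; group

/-- if `|X| ≥ 4`, then there is no rack on `X` whose left multiplication
group equals the full symmetric group `S_X`. -/
theorem symmetric_group_not_rack_admissible {X : Type*} (h : 4 ≤ Cardinal.mk X) :
    ¬ ∃ Q : RackStr X, Q.lmlt = (⊤ : Subgroup (Equiv.Perm X)) := by
  classical
  rintro ⟨Q, hQ⟩
  have hconj : ∀ (σ : Equiv.Perm X) (x : X), σ * Q.L x * σ⁻¹ = Q.L (σ x) := fun σ x =>
    rack_conj Q σ (hQ ▸ Subgroup.mem_top σ) x
  have hL1 : ∀ x, Q.L x = 1 := by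
    intro x
    refine centralizes_stab_eq_one h x (Q.L x) (fun σ hσ => ?_)
    have h1 := hconj σ x
    rw [hσ] at h1
    exact mul_inv_eq_iff_eq_mul.mp h1
  have hbot : Q.lmlt ≤ ⊥ := by
    rw [RackStr.lmlt, Subgroup.closure_le]
    rintro g ⟨x, rfl⟩
    simp [hL1 x]
  have hne : Nonempty X := Cardinal.mk_ne_zero_iff.mp (by positivity)
  obtain ⟨a⟩ := hne
  obtain ⟨u, hua, -, -⟩ := exists_ne_ne_ne h a a a
  have hm : Equiv.swap a u ∈ Q.lmlt := hQ ▸ Subgroup.mem_top _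
  have hs : Equiv.swap a u = 1 := Subgroup.mem_bot.mp (hbot hm)
  have := congrArg (fun f : Equiv.Perm X => f a) hs
  simp [Equiv.swap_apply_left] at this
  exact hua this
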